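/- Let V ⊆ H be Hilbert spaces with bounded embedding, a : V × V → ℝ a continuous coercive bilinear form, and φ' : H → H a map with ⟨φ'(y) w, w⟩ ≥ 0 (monotone, nonnegative multiplication operator). Suppose p₁, p₂ ∈ V satisfy a(v, p₁) + ⟨φ'(y₁) p₁, v⟩ = ⟨y₁ - y_d, v⟩ and a(v, p₂) + ⟨φ'(y₂) p₂, v⟩ = ⟨y₂ - y_d, v⟩ for all v ∈ V, and that ‖(φ'(y₁) - φ'(y₂)) p₁‖_{H} ≤ L ‖y₁ - y₂‖_H for some L ≥ 0. Then ‖p₁ - p₂‖_V ≤ C(1 + L) ‖y₁ - y₂‖_H for a constant C depending only on the coercivity and embedding constants. -/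

import Mathlib

/-- Stability of the semilinear adjoint equation with respect to perturbations
of the state. -/
theorem adjoint_stability_semilinear
    {V H : Type*} [NormedAddCommGroup V] [InnerProductSpace ℝ V]
    [NormedAddCommGroup H] [InnerProductSpace ℝ H]
    (e : V →L[ℝ] H) (ce : ℝ) (hce : 0 < ce)
    (hemb : ∀ v : V, ‖e v‖ ≤ ce * ‖v‖)
    (a : V →L[ℝ] V →L[ℝ] ℝ) (M c₀ : ℝ) (hc₀ : 0 < c₀)
    (hbound : ∀ x y : V, |a x y| ≤ M * ‖x‖ * ‖y‖)
    (hcoer : ∀ x : V, c₀ * ‖x‖ ^ 2 ≤ a x x)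
    (Φ : H → H →L[ℝ] H)
    (hΦpos : ∀ y w : H, 0 ≤ (inner ℝ (Φ y w) w : ℝ)) :
    ∃ C : ℝ, 0 < C ∧
      ∀ (y₁ y₂ yd : H) (p₁ p₂ : V) (L : ℝ), 0 ≤ L →
        (∀ v : V, a v p₁ + inner ℝ (Φ y₁ (e p₁)) (e v) = (inner ℝ (y₁ - yd) (e v) : ℝ)) →
        (∀ v : V, a v p₂ + inner ℝ (Φ y₂ (e p₂)) (e v) = (inner ℝ (y₂ - yd) (e v) : ℝ)) →
        ‖Φ y₁ (e p₁) - Φ y₂ (e p₁)‖ ≤ L * ‖y₁ - y₂‖ →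
        ‖p₁ - p₂‖ ≤ C * (1 + L) * ‖y₁ - y₂‖ := by
  refine ⟨ce / c₀, div_pos hce hc₀, ?_⟩
  intro y₁ y₂ yd p₁ p₂ L hL h1 h2 hlip
  set q : V := p₁ - p₂ with hq
  set D : H := Φ y₁ (e p₁) - Φ y₂ (e p₁) with hD
  -- subtract the two equations tested with q
  have hsub : a q q + inner ℝ D (e q) + (inner ℝ (Φ y₂ (e q)) (e q) : ℝ)
      = inner ℝ (y₁ - y₂) (e q) := by
    have h1q := h1 q
    have h2q := h2 q
    have hA : a q p₁ - a q p₂ = a q q := by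
      simp [hq, map_sub]
    have heq : e q = e p₁ - e p₂ := by simp [hq, map_sub]
    have hI : (inner ℝ D (e q) : ℝ) + inner ℝ (Φ y₂ (e q)) (e q)
        = inner ℝ (Φ y₁ (e p₁)) (e q) - inner ℝ (Φ y₂ (e p₂)) (e q) := by
      rw [hD, heq]
      simp [inner_sub_left, map_sub]
    have hR : (inner ℝ (y₁ - yd) (e q) : ℝ) - inner ℝ (y₂ - yd) (e q)
        = inner ℝ (y₁ - y₂) (e q) := by
      rw [← inner_sub_left]
      congr 1
      abel
    linarith [h1q, h2q, hA, hI, hR]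
  -- coercivity + Cauchy-Schwarz
  have hcs1 : (inner ℝ (y₁ - y₂) (e q) : ℝ) ≤ ‖y₁ - y₂‖ * ‖e q‖ :=
    real_inner_le_norm _ _
  have hcs2 : -(inner ℝ D (e q) : ℝ) ≤ L * ‖y₁ - y₂‖ * ‖e q‖ := by
    have := abs_real_inner_le_norm D (e q)
    have h' : |(inner ℝ D (e q) : ℝ)| ≤ (L * ‖y₁ - y₂‖) * ‖e q‖ :=
      le_trans this (mul_le_mul_of_nonneg_right hlip (norm_nonneg _))
    linarith [neg_abs_le (inner ℝ D (e q) : ℝ)]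
  have hpos := hΦpos y₂ (e q)
  have hcoq := hcoer q
  have heq : ‖e q‖ ≤ ce * ‖q‖ := hemb q
  have hkey : c₀ * ‖q‖ ^ 2 ≤ (1 + L) * ‖y₁ - y₂‖ * (ce * ‖q‖) := by
    have h₁ : c₀ * ‖q‖ ^ 2 ≤ (1 + L) * ‖y₁ - y₂‖ * ‖e q‖ := by nlinarith
    refine le_trans h₁ ?_
    have hnn : 0 ≤ (1 + L) * ‖y₁ - y₂‖ := by positivity
    exact mul_le_mul_of_nonneg_left heq hnn
  rcases eq_or_lt_of_le (norm_nonneg q) with h0 | h0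
  · rw [← h0]
    positivity
  · rw [div_mul_eq_mul_div, div_mul_eq_mul_div, le_div_iff₀ hc₀]
    nlinarith
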